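/- Let a ∈ ℝ and, for ĥ, k ∈ ℂ with a·ĥ ≠ 1 and ĥ ≠ 1, set Γ = (1 − (1/2)·k² − 2a·ĥ + a²·ĥ²)/((1 − a·ĥ)²·(1 − ĥ)), Σ1 = k/((1 − a·ĥ)·(1 − ĥ)), Σ2 = (1/2)·k²/((1 − a·ĥ)²·(1 − ĥ)) (these are the class X quantities with a1 = a2 = a, a3 = 1, a4 = 0, for which the terms involving b and a4 vanish). Then the mean-square stability function R̂(ĥ,k) = |Γ|² + Γ·conj(Σ2) + conj(Γ)·Σ2 + |Σ1|² + 3·|Σ2|² satisfies the identity R̂(ĥ,k) = (|a·ĥ − 1|⁴ + (1/2)·|k|⁴ + |k|²·|a·ĥ − 1|²)/(|a·ĥ − 1|⁴·|ĥ − 1|²), i.e. it coincides with the class II stability function, and consequently R̂(ĥ,k) < 1 holds for all ĥ, k ∈ ℂ with 2·Re(ĥ) + |k|² < 0 and a·ĥ ≠ 1 if and only if a ≥ 1/4. -/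

import Mathlib

open ComplexConjugate

/-- Γ for the class X scheme with a1 = a2 = a, a3 = 1, a4 = 0 (the terms
involving b and a4 vanish). -/
noncomputable def GammaX (a : ℝ) (h k : ℂ) : ℂ :=
  (1 - (1/2) * k^2 - 2 * (a : ℂ) * h + (a : ℂ)^2 * h^2)
    / ((1 - (a : ℂ) * h)^2 * (1 - h))

/-- Σ1 for the class X scheme with a1 = a2 = a, a3 = 1, a4 = 0. -/
noncomputable def Sigma1X (a : ℝ) (h k : ℂ) : ℂ :=
  k / ((1 - (a : ℂ) * h) * (1 - h))

/-- Σ2 for the class X scheme with a1 = a2 = a, a3 = 1, a4 = 0. -/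
noncomputable def Sigma2X (a : ℝ) (h k : ℂ) : ℂ :=
  (1/2) * k^2 / ((1 - (a : ℂ) * h)^2 * (1 - h))

/-- The mean-square stability function
R̂ = |Γ|² + Γ·conj(Σ2) + conj(Γ)·Σ2 + |Σ1|² + 3·|Σ2|² of the class X scheme
with a1 = a2 = a, a3 = 1, a4 = 0. -/
noncomputable def RhatX (a : ℝ) (h k : ℂ) : ℂ :=
  (‖GammaX a h k‖^2 : ℝ) + GammaX a h k * conj (Sigma2X a h k)
    + conj (GammaX a h k) * Sigma2X a h k + (‖Sigma1X a h k‖^2 : ℝ)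
    + 3 * (‖Sigma2X a h k‖^2 : ℝ)

set_option maxHeartbeats 1000000

private lemma aux_real_lemma (A B K : ℝ) (hA : A ≠ 0) (hB : B ≠ 0) :
    (B⁻¹)^2 + (K / (A * B))^2 + 2 * ((1/2) * K^2 / (A^2 * B))^2
      = (A^4 + (1/2) * K^4 + K^2 * A^2) / (A^4 * B^2) := by
  field_simp
  ring

private lemma aux_rhat_eq (a : ℝ) (h k : ℂ) (hah : (a : ℂ) * h ≠ 1) (hh : h ≠ 1) :
    RhatX a h k
      = (((‖(a : ℂ) * h - 1‖^4 + (1/2) * ‖k‖^4 + ‖k‖^2 * ‖(a : ℂ) * h - 1‖^2)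
          / (‖(a : ℂ) * h - 1‖^4 * ‖h - 1‖^2) : ℝ) : ℂ) := by
  have hA : (1 : ℂ) - (a : ℂ) * h ≠ 0 := by
    intro e; apply hah; linear_combination -e
  have hB : (1 : ℂ) - h ≠ 0 := by
    intro e; apply hh; linear_combination -e
  have hsum : GammaX a h k + Sigma2X a h k = (1 - h)⁻¹ := by
    unfold GammaX Sigma2X
    field_simp
    ring
  have key : RhatX a h k
      = (‖GammaX a h k + Sigma2X a h k‖ : ℂ)^2 + (‖Sigma1X a h k‖ : ℂ)^2
        + 2 * (‖Sigma2X a h k‖ : ℂ)^2 := by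
    unfold RhatX
    push_cast
    rw [← Complex.mul_conj' (GammaX a h k + Sigma2X a h k),
      ← Complex.mul_conj' (GammaX a h k), ← Complex.mul_conj' (Sigma1X a h k),
      ← Complex.mul_conj' (Sigma2X a h k)]
    simp only [map_add]
    ring
  have hAn : ‖(a:ℂ)*h - 1‖ ≠ 0 := by simpa [sub_eq_zero] using hah
  have hBn : ‖h - 1‖ ≠ 0 := by simpa [sub_eq_zero] using hh
  have e1 : ‖GammaX a h k + Sigma2X a h k‖ = ‖h-1‖⁻¹ := by
    rw [hsum, norm_inv, norm_sub_rev]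
  have e2 : ‖Sigma1X a h k‖ = ‖k‖ / (‖(a:ℂ)*h-1‖ * ‖h-1‖) := by
    unfold Sigma1X
    rw [norm_div, norm_mul, norm_sub_rev ((1:ℂ)) ((a:ℂ)*h), norm_sub_rev (1:ℂ) h]
  have e3 : ‖Sigma2X a h k‖ = (1/2) * ‖k‖^2 / (‖(a:ℂ)*h-1‖^2 * ‖h-1‖) := by
    unfold Sigma2X
    rw [norm_div, norm_mul, norm_mul, norm_pow, norm_pow,
      norm_sub_rev ((1:ℂ)) ((a:ℂ)*h), norm_sub_rev (1:ℂ) h]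
    norm_num
  rw [key, e1, e2, e3]
  exact_mod_cast congrArg (fun r : ℝ => (r : ℂ))
    (aux_real_lemma ‖(a:ℂ)*h-1‖ ‖h-1‖ ‖k‖ hAn hBn)

private lemma aux_F0 (t u : ℝ) (ht : 0 ≤ t) (hu : 0 ≤ u) (hut : u ≤ 4*t) :
    2*u*(1+t)^2 + 2*u^2 ≤ ((1+t)^2)^2*(u^2+2*u) := by
  have h0 : 0 ≤ 2*(1+t)^4 - 2*(1+t)^2 := by
    nlinarith [sq_nonneg t, sq_nonneg (1+t), sq_nonneg ((1+t)^2)]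
  have h4 : 0 ≤ (4*t)*((1+t)^4 - 2) + 2*(1+t)^4 - 2*(1+t)^2 := by
    nlinarith [sq_nonneg t, sq_nonneg (t*t), sq_nonneg (t^2)]
  have inner : 0 ≤ u*((1+t)^4 - 2) + 2*(1+t)^4 - 2*(1+t)^2 := by
    rcases le_or_gt 0 ((1+t)^4 - 2) with hc | hc
    · nlinarith [mul_nonneg hu hc]
    · nlinarith [mul_nonneg (sub_nonneg.2 hut) (neg_nonneg.2 hc.le)]
  nlinarith [mul_nonneg hu inner]

private lemma aux_suff (a u y s : ℝ) (ha : 1/4 ≤ a) (hu : 0 < u) (hs : 0 ≤ s)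
    (hs2 : s < 2*u) :
    ((1+a*u)^2 + a^2*y^2)^2 + (1/2)*s^2 + s*((1+a*u)^2 + a^2*y^2)
      < ((1+a*u)^2 + a^2*y^2)^2 * ((1+u)^2 + y^2) := by
  set M := (1+a*u)^2 + a^2*y^2 with hM
  have hw : 0 ≤ a^2*y^2 := by positivity
  have haun : 0 ≤ a*u := by nlinarith
  have hP1 : 1 ≤ (1+a*u)^2 := by nlinarith
  have hM1 : 1 ≤ M := by rw [hM]; nlinarith
  have hF0 : 2*u*(1+a*u)^2 + 2*u^2 ≤ ((1+a*u)^2)^2*(u^2+2*u) :=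
    aux_F0 (a*u) u haun hu.le (by nlinarith)
  have step1 : s*M + (1/2)*s^2 < 2*u*M + 2*u^2 := by
    nlinarith [mul_pos (by linarith : (0:ℝ) < 2*u - s)
      (by nlinarith : (0:ℝ) < M + (2*u+s)/2)]
  have step2 : 2*u*M + 2*u^2 ≤ M^2*(u^2+2*u) + M^2*y^2 := by
    rw [hM]
    nlinarith [hF0,
      mul_nonneg (mul_nonneg hu.le hw) (by nlinarith : (0:ℝ) ≤ 2*(1+a*u)^2 - 1),
      mul_nonneg (mul_nonneg hw hw) (by nlinarith : (0:ℝ) ≤ u^2+2*u),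
      mul_nonneg (mul_nonneg (by positivity : (0:ℝ) ≤ 2*(1+a*u)^2) hw) (sq_nonneg u),
      mul_nonneg (sq_nonneg y) (sq_nonneg ((1+a*u)^2 + a^2*y^2))]
  have expand : M^2*((1+u)^2+y^2) = M^2 + M^2*(u^2+2*u) + M^2*y^2 := by ring
  clear_value M
  linarith [step1, step2]

private lemma aux_nec (a u : ℝ) (h64 : 64*(1+a^2)^4*u = 1-4*a) (hu : 0 < u) :
    ((1+a*u)^2)^2*(1+u)^2
      ≤ ((1+a*u)^2)^2 + (1/2)*(2*u-u^3)^2 + (2*u-u^3)*(1+a*u)^2 := by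
  have hc1 : (1:ℝ) ≤ 1 + a^2 := by nlinarith [sq_nonneg a]
  have habs1 : 2*a ≤ 1 + a^2 := by nlinarith [sq_nonneg (a-1)]
  have habs2 : -(1+a^2) ≤ 2*a := by nlinarith [sq_nonneg (a+1)]
  have hc4 : 1 + a^2 ≤ (1+a^2)^4 := le_self_pow₀ hc1 (by norm_num)
  have hc24 : (1+a^2)^2 ≤ (1+a^2)^4 := by
    nlinarith [mul_nonneg (sq_nonneg (1+a^2)) (by nlinarith : (0:ℝ) ≤ (1+a^2)^2 - 1)]
  have hC4 : (0:ℝ) ≤ (1+a^2)^4 := by positivity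
  have hu3 : 64*u ≤ 3 := by
    nlinarith [h64, mul_le_mul_of_nonneg_left hc4 (by linarith : (0:ℝ) ≤ 64*u),
      mul_pos (pow_pos (by linarith : (0:ℝ) < 1+a^2) 4) hu]
  have hu1 : u ≤ 1 := by linarith
  have ha2c : a^2 ≤ 1+a^2 := by nlinarith
  have ha4c : a^4 ≤ (1+a^2)^2 := by nlinarith [sq_nonneg (a^2)]
  have hX1 : 1+4*a+10*a^2 ≤ 13*(1+a^2)^2 := by nlinarith
  have hX2u : (2+2*a+6*a^2+8*a^3)*u ≤ (1+a^2)^2 := by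
    have h8 : 2+2*a+6*a^2+8*a^3 ≤ 13*(1+a^2)^2 := by
      nlinarith [mul_le_mul_of_nonneg_left habs1 (sq_nonneg a),
        mul_le_mul_of_nonneg_left habs2 (sq_nonneg a)]
    nlinarith [mul_le_mul_of_nonneg_right h8 hu.le]
  have hX3u : (a^2+4*a^3+2*a^4)*u^2 ≤ (1+a^2)^2 := by
    have h9 : a^2+4*a^3+2*a^4 ≤ 6*(1+a^2)^2 := by
      nlinarith [mul_le_mul_of_nonneg_left habs2 (sq_nonneg a)]
    nlinarith [mul_le_mul_of_nonneg_right h9 (sq_nonneg u), sq_nonneg u, mul_pos hu hu]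
  have hX4u : -((1+a^2)^2) ≤ (1/2 - a^4)*u^3 := by
    have : (a^4 - 1/2)*u^3 ≤ (1+a^2)^2 := by
      nlinarith [pow_le_one₀ hu.le hu1 (n := 3), pow_pos hu 3,
        mul_le_mul_of_nonneg_right ha4c (pow_pos hu 3).le]
    linarith
  have hbr : 0 ≤ 64*(1+a^2)^4 - (1+4*a+10*a^2) - (2+2*a+6*a^2+8*a^3)*u
      - (a^2+4*a^3+2*a^4)*u^2 + (1/2-a^4)*u^3 := by
    nlinarith [hX1, hX2u, hX3u, hX4u, hc24, hC4]
  have key : ((1+a*u)^2)^2 + (1/2)*(2*u-u^3)^2 + (2*u-u^3)*(1+a*u)^2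
      - ((1+a*u)^2)^2*(1+u)^2
      = u^3 * (64*(1+a^2)^4 - (1+4*a+10*a^2) - (2+2*a+6*a^2+8*a^3)*u
          - (a^2+4*a^3+2*a^4)*u^2 + (1/2-a^4)*u^3) := by
    linear_combination (-(u^2)) * h64
  linarith [mul_nonneg (pow_pos hu 3).le hbr, key]

private lemma aux_norm_sq_eq (z : ℂ) : ‖z‖^2 = z.re^2 + z.im^2 := by
  rw [Complex.sq_norm, Complex.normSq_apply]; ring

/-- The class X mean-square stability function with a1 = a2 = a, a3 = 1,
a4 = 0 coincides with the class II stability function, and consequently it is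
< 1 on the whole mean-square stability domain {2·Re(ĥ) + |k|² < 0} of the
test equation (wherever a·ĥ ≠ 1) if and only if a ≥ 1/4. -/
theorem order10_classX_diag_stability (a : ℝ) :
    (∀ h k : ℂ, (a : ℂ) * h ≠ 1 → h ≠ 1 →
      RhatX a h k
        = (((‖(a : ℂ) * h - 1‖^4 + (1/2) * ‖k‖^4 + ‖k‖^2 * ‖(a : ℂ) * h - 1‖^2)
            / (‖(a : ℂ) * h - 1‖^4 * ‖h - 1‖^2) : ℝ) : ℂ)) ∧
    ((∀ h k : ℂ, 2 * h.re + ‖k‖^2 < 0 → (a : ℂ) * h ≠ 1 →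
        (RhatX a h k).re < 1) ↔ 1/4 ≤ a) := by
  refine ⟨fun h k hah hh => aux_rhat_eq a h k hah hh, ?_, ?_⟩
  · -- stability on the domain implies a ≥ 1/4
    intro hstab
    by_contra hlt
    push_neg at hlt
    obtain ⟨u, hu_def⟩ : ∃ u : ℝ, u = (1-4*a) / (64*(1+a^2)^4) := ⟨_, rfl⟩
    have hden : (0:ℝ) < 64*(1+a^2)^4 := by positivity
    have hu : 0 < u := by
      rw [hu_def]; exact div_pos (by linarith) hden
    have h64 : 64*(1+a^2)^4*u = 1-4*a := by
      rw [hu_def]; field_simp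
    have hc1 : (1:ℝ) ≤ 1 + a^2 := by nlinarith [sq_nonneg a]
    have hc4 : 1 + a^2 ≤ (1+a^2)^4 := le_self_pow₀ hc1 (by norm_num)
    have hu3 : 64*u ≤ 3 := by
      have h3c : 1-4*a ≤ 3*(1+a^2)^4 := by nlinarith [sq_nonneg (a+1), hc4, hc1]
      have h5 : (64*u)*((1+a^2)^4) ≤ 3*((1+a^2)^4) := by nlinarith [h64, h3c]
      exact le_of_mul_le_mul_right h5 (by positivity)
    have hu1 : u ≤ 1 := by linarith
    -- a*u > -1
    have hau : -1 < a*u := by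
      have h1 : a*(1-4*a) + 64*(1+a^2)^4 > 0 := by
        nlinarith [sq_nonneg (a-1), sq_nonneg (a+1), sq_nonneg a, sq_nonneg (a^2),
          sq_nonneg (1+a^2), hc4]
      have h2 : (-1) * (64*(1+a^2)^4) < (a*u) * (64*(1+a^2)^4) := by
        nlinarith [h64]
      nlinarith [h2, hden]
    have hs0 : (0:ℝ) ≤ 2*u - u^3 := by nlinarith [pow_le_one₀ hu.le hu1 (n := 2)]
    set hc : ℂ := ((-u : ℝ) : ℂ) with hc_def
    set kc : ℂ := ((Real.sqrt (2*u - u^3) : ℝ) : ℂ) with kc_def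
    have hkn : ‖kc‖^2 = 2*u - u^3 := by
      rw [kc_def, Complex.norm_real, Real.norm_eq_abs, sq_abs, Real.sq_sqrt hs0]
    have hdom : 2 * hc.re + ‖kc‖^2 < 0 := by
      rw [hkn, hc_def, Complex.ofReal_re]
      nlinarith [pow_pos hu 3]
    have hah : (a : ℂ) * hc ≠ 1 := by
      rw [hc_def]
      intro e
      have : a * (-u) = 1 := by
        have := congrArg Complex.re e
        simpa [Complex.mul_re] using this
      nlinarith
    have hh1 : hc ≠ 1 := by
      rw [hc_def]
      intro e
      have : -u = 1 := by
        have := congrArg Complex.re e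
        simpa using this
      linarith
    have hre := hstab hc kc hdom hah
    rw [aux_rhat_eq a hc kc hah hh1, Complex.ofReal_re] at hre
    -- now contradict: the ratio is ≥ 1
    have hA2 : ‖(a:ℂ)*hc - 1‖^2 = (1+a*u)^2 := by
      rw [hc_def]
      rw [show (a:ℂ) * ((-u : ℝ) : ℂ) - 1 = ((a*(-u) - 1 : ℝ) : ℂ) by push_cast; ring]
      rw [Complex.norm_real, Real.norm_eq_abs, sq_abs]; ring
    have hB2 : ‖hc - 1‖^2 = (1+u)^2 := by
      rw [hc_def]
      rw [show ((-u : ℝ) : ℂ) - 1 = ((-u - 1 : ℝ) : ℂ) by push_cast; ring]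
      rw [Complex.norm_real, Real.norm_eq_abs, sq_abs]; ring
    have hA4 : ‖(a:ℂ)*hc - 1‖^4 = ((1+a*u)^2)^2 := by
      rw [show ‖(a:ℂ)*hc - 1‖^4 = (‖(a:ℂ)*hc - 1‖^2)^2 by ring, hA2]
    have hk4 : ‖kc‖^4 = (2*u - u^3)^2 := by
      rw [show ‖kc‖^4 = (‖kc‖^2)^2 by ring, hkn]
    have hP0 : (0:ℝ) < (1+a*u)^2 := by nlinarith
    have hdenpos : (0:ℝ) < ‖(a:ℂ)*hc - 1‖^4 * ‖hc - 1‖^2 := by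
      rw [hA4, hB2]; positivity
    have hge : (1:ℝ) ≤ (‖(a:ℂ)*hc - 1‖^4 + (1/2) * ‖kc‖^4 + ‖kc‖^2 * ‖(a:ℂ)*hc - 1‖^2)
        / (‖(a:ℂ)*hc - 1‖^4 * ‖hc - 1‖^2) := by
      rw [one_le_div hdenpos, hA4, hB2, hk4, hkn, hA2]
      exact aux_nec a u h64 hu
    linarith
  · -- a ≥ 1/4 implies stability on the domain
    intro ha h k hdom hah
    have hs : (0:ℝ) ≤ ‖k‖^2 := by positivity
    have hx : h.re < 0 := by linarith
    have hh1 : h ≠ 1 := by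
      intro e; rw [e] at hx; simp at hx; linarith
    rw [aux_rhat_eq a h k hah hh1, Complex.ofReal_re]
    have hAn : ((a:ℂ)*h - 1) ≠ 0 := by
      intro e; apply hah; linear_combination e
    have hBn : (h - 1) ≠ 0 := by
      intro e; apply hh1; linear_combination e
    have hA2 : ‖(a:ℂ)*h - 1‖^2 = (1 + a*(-h.re))^2 + a^2*(h.im)^2 := by
      rw [aux_norm_sq_eq]
      simp [Complex.mul_re, Complex.mul_im]
      ring
    have hB2 : ‖h - 1‖^2 = (1 + (-h.re))^2 + (h.im)^2 := by
      rw [aux_norm_sq_eq]; simp; ring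
    have hA4 : ‖(a:ℂ)*h - 1‖^4 = ((1 + a*(-h.re))^2 + a^2*(h.im)^2)^2 := by
      rw [show ‖(a:ℂ)*h - 1‖^4 = (‖(a:ℂ)*h - 1‖^2)^2 by ring, hA2]
    have hdenpos : (0:ℝ) < ‖(a:ℂ)*h - 1‖^4 * ‖h - 1‖^2 := by
      have h1 : (0:ℝ) < ‖(a:ℂ)*h - 1‖ := norm_pos_iff.2 hAn
      have h2 : (0:ℝ) < ‖h - 1‖ := norm_pos_iff.2 hBn
      positivity
    rw [div_lt_one hdenpos, hA4, hB2, hA2]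
    have := aux_suff a (-h.re) h.im (‖k‖^2) ha (by linarith) hs (by linarith)
    calc ((1 + a*(-h.re))^2 + a^2*(h.im)^2)^2 + (1/2) * ‖k‖^4
          + ‖k‖^2 * ((1 + a*(-h.re))^2 + a^2*(h.im)^2)
        = ((1+a*(-h.re))^2 + a^2*(h.im)^2)^2 + (1/2)*(‖k‖^2)^2
          + ‖k‖^2*((1+a*(-h.re))^2 + a^2*(h.im)^2) := by ring
      _ < ((1+a*(-h.re))^2 + a^2*(h.im)^2)^2 * ((1+(-h.re))^2 + (h.im)^2) := this
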